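/- The Bellman optimality operator of the History-MDP of a group-invariant POMDP preserves group-invariance: if Q : H × A → ℝ is bounded and satisfies Q(g•h, g•a) = Q(h, a) for all g ∈ G, h ∈ H, a ∈ A, then (BQ)(g•h, g•a) = (BQ)(h, a) for all g ∈ G, h ∈ H, a ∈ A. -/
import Mathlib


open scoped NNReal

/-- A group-invariant POMDP over finite types of states `S`, actions `A`,
and observations `Ω`, with a group `G` acting on each. -/
structure GIPOMDP (G S A Ω : Type) [Group G] [MulAction G S] [MulAction G A] [MulAction G Ω]
    [Fintype S] [Fintype A] [Fintype Ω] where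
  b0 : S → ℝ≥0
  T : S → A → S → ℝ≥0
  R : S → A → ℝ
  O0 : S → Ω → ℝ≥0
  O : A → S → Ω → ℝ≥0
  b0_sum : ∑ s, b0 s = 1
  b0_inv : ∀ (g : G) (s : S), b0 (g • s) = b0 s
  T_sum : ∀ (s : S) (a : A), ∑ s', T s a s' = 1
  T_inv : ∀ (g : G) (s : S) (a : A) (s' : S), T (g • s) (g • a) (g • s') = T s a s'
  R_inv : ∀ (g : G) (s : S) (a : A), R (g • s) (g • a) = R s a
  O0_sum : ∀ s : S, ∑ o, O0 s o = 1
  O0_inv : ∀ (g : G) (s : S) (o : Ω), O0 (g • s) (g • o) = O0 s o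
  O_sum : ∀ (a : A) (s' : S), ∑ o, O a s' o = 1
  O_inv : ∀ (g : G) (a : A) (s' : S) (o : Ω), O (g • a) (g • s') (g • o) = O a s' o

/-- A history: an initial observation followed by a list of action–observation pairs. -/
abbrev Hist (A Ω : Type) : Type := Ω × List (A × Ω)

variable {G S A Ω : Type} [Group G] [MulAction G S] [MulAction G A] [MulAction G Ω]
  [Fintype S] [Fintype A] [Fintype Ω]

/-- Componentwise group action on histories. -/
def histAct (g : G) (h : Hist A Ω) : Hist A Ω :=
  (g • h.1, h.2.map fun p => (g • p.1, g • p.2))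

/-- Appending an action–observation pair to a history: `h·(a,o)`. -/
def snocH (h : Hist A Ω) (a : A) (o : Ω) : Hist A Ω :=
  (h.1, h.2 ++ [(a, o)])

/-- Unnormalized filter weight, by recursion on the reversed action–observation list. -/
noncomputable def wRev (P : GIPOMDP G S A Ω) (o0 : Ω) : List (A × Ω) → S → ℝ≥0
  | [] => fun s => P.b0 s * P.O0 s o0
  | (a, o) :: rest => fun s' => (∑ s, wRev P o0 rest s * P.T s a s') * P.O a s' o

/-- Unnormalized filter weight `w_h(s)`: `w_{(o0,[])}(s) = b0(s)·O0(s,o0)` and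
`w_{h·(a,o)}(s') = (Σ_s w_h(s)·T(s,a,s'))·O(a,s',o)`. -/
noncomputable def w (P : GIPOMDP G S A Ω) (h : Hist A Ω) (s : S) : ℝ≥0 :=
  wRev P h.1 h.2.reverse s

/-- Belief `Pr(s|h)`, with the convention that it is `0` when the weights sum to `0`. -/
noncomputable def belief (P : GIPOMDP G S A Ω) (h : Hist A Ω) (s : S) : ℝ≥0 :=
  if 0 < ∑ s', w P h s' then w P h s / ∑ s', w P h s' else 0

/-- Conditional observation probability `Pr(o|h,a) = Σ_s Pr(s|h)·Σ_{s'} T(s,a,s')·O(a,s',o)`. -/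
noncomputable def probObs (P : GIPOMDP G S A Ω) (h : Hist A Ω) (a : A) (o : Ω) : ℝ≥0 :=
  ∑ s, belief P h s * ∑ s', P.T s a s' * P.O a s' o

open Classical in
/-- History-MDP transition function: `T̄(h,a,h') = Pr(o|h,a)` if `h' = h·(a,o)` for some `o`,
and `0` otherwise. -/
noncomputable def Tbar (P : GIPOMDP G S A Ω) (h : Hist A Ω) (a : A) (h' : Hist A Ω) : ℝ≥0 :=
  ∑ o, if h' = snocH h a o then probObs P h a o else 0

/-- History-MDP reward function `R̄(h,a) = Σ_s Pr(s|h)·R(s,a)`. -/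
noncomputable def Rbar (P : GIPOMDP G S A Ω) (h : Hist A Ω) (a : A) : ℝ :=
  ∑ s, (belief P h s : ℝ) * P.R s a

/-- Bellman optimality operator of the History-MDP:
`(BQ)(h,a) = R̄(h,a) + γ·Σ_o Pr(o|h,a)·max_{a'} Q(h·(a,o), a')`. -/
noncomputable def bellman [Nonempty A] (P : GIPOMDP G S A Ω) (γ : ℝ)
    (Q : Hist A Ω × A → ℝ) : Hist A Ω × A → ℝ :=
  fun x => Rbar P x.1 x.2 + γ * ∑ o, (probObs P x.1 x.2 o : ℝ) *
    Finset.univ.sup' Finset.univ_nonempty (fun a' => Q (snocH x.1 x.2 o, a'))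

section Aux
variable {G S A Ω : Type} [Group G] [MulAction G S] [MulAction G A] [MulAction G Ω]
  [Fintype S] [Fintype A] [Fintype Ω]

lemma sum_smul_fun {M : Type*} [AddCommMonoid M] {X : Type*} [Fintype X] [MulAction G X]
    (g : G) (f : X → M) : ∑ x, f (g • x) = ∑ x, f x :=
  Fintype.sum_equiv (MulAction.toPerm g) _ f (fun _ => rfl)

lemma wRev_inv (P : GIPOMDP G S A Ω) (g : G) (o0 : Ω) (l : List (A × Ω)) (s : S) :
    wRev P (g • o0) (l.map fun p => (g • p.1, g • p.2)) (g • s) = wRev P o0 l s := by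
  induction l generalizing s with
  | nil => simp [wRev, P.b0_inv, P.O0_inv]
  | cons p rest ih =>
    obtain ⟨a, o⟩ := p
    simp only [List.map_cons, wRev]
    rw [P.O_inv]
    congr 1
    refine Fintype.sum_equiv (MulAction.toPerm g⁻¹) _ _ fun s0 => ?_
    show _ = wRev P o0 rest (g⁻¹ • s0) * P.T (g⁻¹ • s0) a s
    conv_lhs => rw [← smul_inv_smul g s0]
    rw [ih, P.T_inv]

lemma w_inv (P : GIPOMDP G S A Ω) (g : G) (h : Hist A Ω) (s : S) :
    w P (histAct g h) (g • s) = w P h s := by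
  simpa [w, histAct, List.map_reverse] using wRev_inv P g h.1 h.2.reverse s

lemma w_sum_inv (P : GIPOMDP G S A Ω) (g : G) (h : Hist A Ω) :
    ∑ s, w P (histAct g h) s = ∑ s, w P h s := by
  rw [← sum_smul_fun g (w P (histAct g h))]
  exact Finset.sum_congr rfl fun s _ => w_inv P g h s

lemma belief_inv (P : GIPOMDP G S A Ω) (g : G) (h : Hist A Ω) (s : S) :
    belief P (histAct g h) (g • s) = belief P h s := by
  simp [belief, w_sum_inv P g h, w_inv P g h s]

lemma belief_inv' (P : GIPOMDP G S A Ω) (g : G) (h : Hist A Ω) (s : S) :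
    belief P (histAct g h) s = belief P h (g⁻¹ • s) := by
  conv_lhs => rw [← smul_inv_smul g s]
  rw [belief_inv]

lemma probObs_inv (P : GIPOMDP G S A Ω) (g : G) (h : Hist A Ω) (a : A) (o : Ω) :
    probObs P (histAct g h) (g • a) (g • o) = probObs P h a o := by
  unfold probObs
  refine Fintype.sum_equiv (MulAction.toPerm g⁻¹) _ _ fun s => ?_
  show _ = belief P h (g⁻¹ • s) * ∑ s', P.T (g⁻¹ • s) a s' * P.O a s' o
  rw [belief_inv']
  congr 1
  refine Fintype.sum_equiv (MulAction.toPerm g⁻¹) _ _ fun s' => ?_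
  show P.T s (g • a) s' * P.O (g • a) s' (g • o) = P.T (g⁻¹ • s) a (g⁻¹ • s') * P.O a (g⁻¹ • s') o
  conv_lhs => rw [← smul_inv_smul g s, ← smul_inv_smul g s']
  rw [P.T_inv, P.O_inv]

lemma Rbar_inv (P : GIPOMDP G S A Ω) (g : G) (h : Hist A Ω) (a : A) :
    Rbar P (histAct g h) (g • a) = Rbar P h a := by
  unfold Rbar
  refine Fintype.sum_equiv (MulAction.toPerm g⁻¹) _ _ fun s => ?_
  show (belief P (histAct g h) s : ℝ) * P.R s (g • a) = _
  rw [belief_inv']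
  conv_lhs => rw [← smul_inv_smul g s]
  rw [P.R_inv]
  simp [smul_inv_smul, MulAction.toPerm_apply]

lemma snocH_act (g : G) (h : Hist A Ω) (a : A) (o : Ω) :
    snocH (histAct g h) (g • a) (g • o) = histAct g (snocH h a o) := by
  simp [snocH, histAct]

end Aux

/-- The Bellman optimality operator of the History-MDP of a group-invariant POMDP
preserves group-invariance of bounded Q-functions. -/
theorem bellman_preserves_invariance {G S A Ω : Type} [Group G] [MulAction G S] [MulAction G A] [MulAction G Ω]
    [Fintype S] [Fintype A] [Fintype Ω] [Nonempty S] [Nonempty A] [Nonempty Ω]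
    (P : GIPOMDP G S A Ω)
    (γ : ℝ) (hγ0 : 0 ≤ γ) (hγ1 : γ < 1)
    (Q : Hist A Ω × A → ℝ) (hBdd : ∃ C : ℝ, ∀ x : Hist A Ω × A, |Q x| ≤ C)
    (hInv : ∀ (g : G) (h : Hist A Ω) (a : A), Q (histAct g h, g • a) = Q (h, a)) :
    ∀ (g : G) (h : Hist A Ω) (a : A),
      bellman P γ Q (histAct g h, g • a) = bellman P γ Q (h, a) := by
  intro g h a
  have hmax : ∀ o : Ω,
      Finset.univ.sup' Finset.univ_nonempty
        (fun a' => Q (snocH (histAct g h) (g • a) (g • o), a'))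
      = Finset.univ.sup' Finset.univ_nonempty (fun a' => Q (snocH h a o, a')) := by
    intro o
    apply le_antisymm
    · refine Finset.sup'_le _ _ fun a' _ => ?_
      have h1 := hInv g (snocH h a o) (g⁻¹ • a')
      rw [smul_inv_smul] at h1
      rw [snocH_act, h1]
      exact Finset.le_sup' (fun b => Q (snocH h a o, b)) (Finset.mem_univ (g⁻¹ • a'))
    · refine Finset.sup'_le _ _ fun a' _ => ?_
      have h1 := hInv g (snocH h a o) a'
      rw [← snocH_act] at h1
      rw [← h1]
      exact Finset.le_sup'
        (fun b => Q (snocH (histAct g h) (g • a) (g • o), b)) (Finset.mem_univ (g • a'))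
  unfold bellman
  rw [Rbar_inv P g h a]
  congr 1
  congr 1
  refine Fintype.sum_equiv (MulAction.toPerm g⁻¹) _ _ fun o => ?_
  show (probObs P (histAct g h) (g • a) o : ℝ) * _ = (probObs P h a (g⁻¹ • o) : ℝ) * _
  conv_lhs => rw [← smul_inv_smul g o]
  rw [probObs_inv, hmax (g⁻¹ • o)]
  simp [MulAction.toPerm_apply]
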